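/- Let T: (ℂ^{2n+1})⁴ → ℂ be the multilinear form determined on a basis v₁,…,v_{n+1}, u₁,…,uₙ by T(vⱼ, v̄ⱼ, vₖ, v̄ₖ) = T(vⱼ, v̄ₖ, vₖ, v̄ⱼ) = 2δⱼδₖ for j ≠ k, = 4 for j = k (1 ≤ j,k ≤ n), and T = 0 on all other quadruples of basis vectors, extended with the symmetries T(X₁,Y₁,X₂,Y₂) = T(X₂,Y₁,X₁,Y₂) = T(X₁,Y₂,X₂,Y₁). Then with f(z,w) = Σⱼ zⱼvⱼ + w v_{n+1} + Σⱼ zⱼw uⱼ, one has T(f(z,w), f̄(χ,τ), f(z,w), f̄(χ,τ)) = 4 Σ_{1≤j,k≤n} δⱼδₖ zⱼzₖχⱼχₖ as polynomials in (z,w,χ,τ). -/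
import Mathlib

open ComplexConjugate

lemma aux_sum_reduce {n : ℕ} (g : (Fin (n+1) ⊕ Fin n) → ℂ)
    (h : ∀ s, (∀ j : Fin n, s ≠ Sum.inl j.castSucc) → g s = 0) :
    ∑ s, g s = ∑ j : Fin n, g (Sum.inl j.castSucc) := by
  classical
  have hinj : ∀ x ∈ (Finset.univ : Finset (Fin n)), ∀ y ∈ Finset.univ,
      (Sum.inl x.castSucc : Fin (n+1) ⊕ Fin n) = Sum.inl y.castSucc → x = y := by
    intro x _ y _ hxy
    simpa [Fin.castSucc_inj] using hxy
  rw [← Finset.sum_image (g := fun j : Fin n => (Sum.inl j.castSucc : Fin (n+1) ⊕ Fin n)) hinj]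
  symm
  apply Finset.sum_subset (Finset.subset_univ _)
  intro x _ hx
  apply h
  intro j hj
  exact hx (Finset.mem_image.2 ⟨j, Finset.mem_univ _, hj.symm⟩)

theorem stmt13 (n : ℕ) (δ : Fin n → ℝ) (hδ : ∀ j, δ j = 1 ∨ δ j = -1)
    (v : Fin (n + 1) → (Fin (2 * n + 1) → ℂ)) (u : Fin n → (Fin (2 * n + 1) → ℂ))
    (hB : LinearIndependent ℂ (Sum.elim v u))
    (hBspan : ⊤ ≤ Submodule.span ℂ (Set.range (Sum.elim v u)))
    (T : (Fin (2 * n + 1) → ℂ) →ₗ[ℂ] (Fin (2 * n + 1) → ℂ) →ₗ[ℂ]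
      (Fin (2 * n + 1) → ℂ) →ₗ[ℂ] (Fin (2 * n + 1) → ℂ) →ₗ[ℂ] ℂ)
    (hsym1 : ∀ X₁ Y₁ X₂ Y₂, T X₁ Y₁ X₂ Y₂ = T X₂ Y₁ X₁ Y₂)
    (hsym2 : ∀ X₁ Y₁ X₂ Y₂, T X₁ Y₁ X₂ Y₂ = T X₁ Y₂ X₂ Y₁)
    (hdiag : ∀ j k : Fin n,
      T (v j.castSucc) (star (v j.castSucc)) (v k.castSucc) (star (v k.castSucc)) =
        if j = k then 4 else 2 * (δ j : ℂ) * (δ k : ℂ))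
    (hswap : ∀ j k : Fin n,
      T (v j.castSucc) (star (v k.castSucc)) (v k.castSucc) (star (v j.castSucc)) =
        if j = k then 4 else 2 * (δ j : ℂ) * (δ k : ℂ))
    (hzero : ∀ a b c d : Fin (n + 1) ⊕ Fin n,
      (¬ ((∃ j k : Fin n, a = Sum.inl j.castSucc ∧ b = Sum.inl j.castSucc ∧
            c = Sum.inl k.castSucc ∧ d = Sum.inl k.castSucc) ∨
          (∃ j k : Fin n, a = Sum.inl j.castSucc ∧ b = Sum.inl k.castSucc ∧
            c = Sum.inl k.castSucc ∧ d = Sum.inl j.castSucc))) →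
      T (Sum.elim v u a) (star (Sum.elim v u b)) (Sum.elim v u c)
          (star (Sum.elim v u d)) = 0) :
    ∀ (z χ : Fin n → ℂ) (w τ : ℂ),
      T (∑ j, z j • v j.castSucc + w • v (Fin.last n) + ∑ j, (z j * w) • u j)
        (∑ j, χ j • star (v j.castSucc) + τ • star (v (Fin.last n))
          + ∑ j, (χ j * τ) • star (u j))
        (∑ j, z j • v j.castSucc + w • v (Fin.last n) + ∑ j, (z j * w) • u j)
        (∑ j, χ j • star (v j.castSucc) + τ • star (v (Fin.last n))
          + ∑ j, (χ j * τ) • star (u j))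
        = 4 * ∑ j, ∑ k, (δ j : ℂ) * (δ k : ℂ) * z j * z k * χ j * χ k := by
  classical
  intro z χ w τ
  set e : Fin (n+1) ⊕ Fin n → (Fin (2*n+1) → ℂ) := Sum.elim v u with he
  set a : Fin (n+1) ⊕ Fin n → ℂ := Sum.elim (Fin.lastCases w z) (fun j => z j * w) with ha
  set b : Fin (n+1) ⊕ Fin n → ℂ := Sum.elim (Fin.lastCases τ χ) (fun j => χ j * τ) with hb
  have hF : (∑ j, z j • v j.castSucc + w • v (Fin.last n) + ∑ j, (z j * w) • u j) =
      ∑ s, a s • e s := by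
    rw [Fintype.sum_sum_type]
    simp [ha, he, Fin.sum_univ_castSucc]
  have hG : (∑ j, χ j • star (v j.castSucc) + τ • star (v (Fin.last n))
      + ∑ j, (χ j * τ) • star (u j)) = ∑ s, b s • star (e s) := by
    rw [Fintype.sum_sum_type]
    simp [hb, he, Fin.sum_univ_castSucc]
  rw [hF, hG]
  have expand : T (∑ s, a s • e s) (∑ s, b s • star (e s)) (∑ s, a s • e s)
      (∑ s, b s • star (e s)) =
      ∑ q, ∑ p, ∑ t, ∑ s, b q * (a p * (b t * (a s *
        T (e s) (star (e t)) (e p) (star (e q))))) := by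
    simp only [map_sum, map_smul, LinearMap.sum_apply, LinearMap.smul_apply, smul_eq_mul,
      Finset.mul_sum]
  rw [expand]
  -- reduction of each of the four sums to `Fin n` via vanishing off the image
  have hzero' : ∀ s t p q, ((∀ j : Fin n, s ≠ Sum.inl j.castSucc) ∨
      (∀ j : Fin n, t ≠ Sum.inl j.castSucc) ∨ (∀ j : Fin n, p ≠ Sum.inl j.castSucc) ∨
      (∀ j : Fin n, q ≠ Sum.inl j.castSucc)) →
      T (e s) (star (e t)) (e p) (star (e q)) = 0 := by
    intro s t p q h
    apply hzero
    rintro (⟨j, k, rfl, rfl, rfl, rfl⟩ | ⟨j, k, rfl, rfl, rfl, rfl⟩) <;>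
      rcases h with h | h | h | h <;> exact h _ rfl
  have red : (∑ q, ∑ p, ∑ t, ∑ s, b q * (a p * (b t * (a s *
        T (e s) (star (e t)) (e p) (star (e q)))))) =
      ∑ q : Fin n, ∑ p : Fin n, ∑ t : Fin n, ∑ j : Fin n,
        χ q * (z p * (χ t * (z j *
          T (v j.castSucc) (star (v t.castSucc)) (v p.castSucc) (star (v q.castSucc))))) := by
    rw [aux_sum_reduce _ (fun q hq => by
      simp only [hzero' _ _ _ q (Or.inr (Or.inr (Or.inr hq))), mul_zero,
        Finset.sum_const_zero])]
    refine Finset.sum_congr rfl fun q _ => ?_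
    rw [aux_sum_reduce _ (fun p hp => by
      simp only [hzero' _ _ p _ (Or.inr (Or.inr (Or.inl hp))), mul_zero,
        Finset.sum_const_zero])]
    refine Finset.sum_congr rfl fun p _ => ?_
    rw [aux_sum_reduce _ (fun t ht => by
      simp only [hzero' _ t _ _ (Or.inr (Or.inl ht)), mul_zero, Finset.sum_const_zero])]
    refine Finset.sum_congr rfl fun t _ => ?_
    rw [aux_sum_reduce _ (fun s hs => by
      simp only [hzero' s _ _ _ (Or.inl hs), mul_zero])]
    refine Finset.sum_congr rfl fun s _ => ?_
    simp [ha, hb, he]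
  rw [red]
  -- value of T on the relevant basis quadruples
  have Tval : ∀ j t p q : Fin n,
      T (v j.castSucc) (star (v t.castSucc)) (v p.castSucc) (star (v q.castSucc)) =
      (if t = j ∧ q = p then (if j = p then 4 else 2 * (δ j : ℂ) * (δ p : ℂ)) else 0) +
      (if t = p ∧ q = j ∧ j ≠ p then 2 * (δ j : ℂ) * (δ p : ℂ) else 0) := by
    intro j t p q
    by_cases h1 : t = j ∧ q = p
    · rw [h1.1, h1.2, hdiag j p]
      by_cases hjp : j = p
      · simp [hjp]
      · simp [hjp]
    · by_cases h2 : t = p ∧ q = j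
      · have hjp : j ≠ p := fun h => h1 ⟨h2.1.trans h.symm, h2.2.trans h⟩
        rw [h2.1, h2.2, hswap j p, if_neg hjp]
        simp [hjp, Ne.symm hjp]
      · have hT : T (v j.castSucc) (star (v t.castSucc)) (v p.castSucc)
            (star (v q.castSucc)) = 0 := by
          apply hzero (Sum.inl j.castSucc) (Sum.inl t.castSucc) (Sum.inl p.castSucc)
            (Sum.inl q.castSucc)
          rintro (⟨j', k', hj, ht, hp, hq⟩ | ⟨j', k', hj, ht, hp, hq⟩) <;>
            simp only [Sum.inl.injEq, Fin.castSucc_inj] at hj ht hp hq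
          · exact h1 ⟨ht.trans hj.symm, hq.trans hp.symm⟩
          · exact h2 ⟨ht.trans hp.symm, hq.trans hj.symm⟩
        rw [hT, if_neg h1, if_neg fun h => h2 ⟨h.1, h.2.1⟩, add_zero]
  have step1 : ∀ q p t : Fin n, (∑ j, χ q * (z p * (χ t * (z j *
      ((if t = j ∧ q = p then (if j = p then 4 else 2 * (δ j : ℂ) * (δ p : ℂ)) else 0) +
       (if t = p ∧ q = j ∧ j ≠ p then 2 * (δ j : ℂ) * (δ p : ℂ) else 0)))))) =
      (if q = p then χ q * (z p * (χ t * (z t *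
          (if t = p then 4 else 2 * (δ t : ℂ) * (δ p : ℂ))))) else 0) +
      (if t = p ∧ q ≠ p then χ q * (z p * (χ t * (z q *
          (2 * (δ q : ℂ) * (δ p : ℂ))))) else 0) := by
    intro q p t
    simp only [mul_add, Finset.sum_add_distrib]
    congr 1
    · rw [Finset.sum_eq_single t]
      · by_cases hqp : q = p <;> simp [hqp]
      · intro j _ hj
        have : ¬(t = j ∧ q = p) := fun h => hj h.1.symm
        simp [this]
      · simp
    · rw [Finset.sum_eq_single q]
      · by_cases h : t = p ∧ q ≠ p
        · simp [h, h.1, h.2]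
        · simp only [h, if_false]
          by_cases htp : t = p
          · have hqp : q = p := by
              by_contra hqp; exact h ⟨htp, hqp⟩
            simp [htp, hqp]
          · have : ¬(t = p ∧ q = q ∧ q ≠ p) := fun hc => htp hc.1
            rw [if_neg (fun hc : t = p ∧ True ∧ q ≠ p => htp hc.1)]
            simp
      · intro j _ hj
        have : ¬(t = p ∧ q = j ∧ j ≠ p) := fun h => hj h.2.1.symm
        simp [this]
      · simp
  simp only [Tval]
  refine Eq.trans (Finset.sum_congr rfl fun q _ => Finset.sum_congr rfl fun p _ =>
    Finset.sum_congr rfl fun t _ => step1 q p t) ?_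
  simp only [Finset.sum_add_distrib, ite_and, Finset.sum_ite_irrel, Finset.sum_const_zero,
    Finset.sum_ite_eq, Finset.sum_ite_eq', Finset.mem_univ, if_true]
  rw [Finset.mul_sum, ← Finset.sum_add_distrib]
  refine Finset.sum_congr rfl fun j _ => ?_
  rw [Finset.mul_sum, ← Finset.sum_add_distrib]
  refine Finset.sum_congr rfl fun k _ => ?_
  by_cases hjk : j = k
  · subst hjk
    rcases hδ j with h | h <;> simp [h] <;> ring
  · rw [if_neg (fun h : k = j => hjk h.symm), if_pos hjk]
    ring
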